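/- arXiv:1901.02995 — 2 statements merged into one kernel-verified Lean document; each statement's English description precedes it below -/
import Mathlib

section
/- Fix z ∈ ℝ and real parameters c_0, c_1, h_0, h_1, λ_0, λ_1 with λ_0, λ_1 > 0. Set 2c = c_0 + c_1, 2a = c_0 − c_1, 2λ = λ_0 + λ_1, 2κ = λ_0 − λ_1, H = h_0 + h_1, and D = (az − κ)² + λ_0 λ_1 e^{zH} (assume D > 0). Define φ_i(t) = e^{t(cz−λ)}[cosh(t√D) + (−1)^i (az − κ + (−1)^i λ_i e^{z h_i}) sinh(t√D)/√D] for i = 0,1. Then φ_0, φ_1 solve the coupled ODE system φ_i'(t) = (c_i z − λ_i) φ_i(t) + λ_i e^{z h_i} φ_{1−i}(t) with φ_i(0) = 1. -/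
open Real

lemma aux_deriv (p s b t : ℝ) :
    HasDerivAt (fun t => Real.exp (t * p) *
        (Real.cosh (t * s) + b * Real.sinh (t * s) / s))
      (p * (Real.exp (t * p) * (Real.cosh (t * s) + b * Real.sinh (t * s) / s))
        + Real.exp (t * p) * (s * Real.sinh (t * s) + b * (s * Real.cosh (t * s)) / s)) t := by
  have hlin : HasDerivAt (fun t : ℝ => t * p) p t := by
    simpa using (hasDerivAt_id t).mul_const p
  have hlin2 : HasDerivAt (fun t : ℝ => t * s) s t := by
    simpa using (hasDerivAt_id t).mul_const s
  have hexp : HasDerivAt (fun t : ℝ => Real.exp (t * p)) (Real.exp (t * p) * p) t := hlin.exp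
  have hcosh : HasDerivAt (fun t : ℝ => Real.cosh (t * s)) (Real.sinh (t * s) * s) t :=
    hlin2.cosh
  have hsinh : HasDerivAt (fun t : ℝ => Real.sinh (t * s)) (Real.cosh (t * s) * s) t :=
    hlin2.sinh
  have hin : HasDerivAt (fun t : ℝ => Real.cosh (t * s) + b * Real.sinh (t * s) / s)
      (Real.sinh (t * s) * s + b * (Real.cosh (t * s) * s) / s) t :=
    hcosh.add ((hsinh.const_mul b).div_const s)
  have : HasDerivAt (fun t => Real.exp (t * p) * (Real.cosh (t * s) + b * Real.sinh (t * s) / s))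
      (Real.exp (t * p) * p * (Real.cosh (t * s) + b * Real.sinh (t * s) / s) +
        Real.exp (t * p) * (Real.sinh (t * s) * s + b * (Real.cosh (t * s) * s) / s)) t :=
    hexp.mul hin
  convert this using 1
  ring

/-- The closed-form jump-telegraph moment generating functions
`φ_i(t) = e^{t(cz−λ)}[cosh(t√D) + (−1)^i (az − κ + (−1)^i λ_i e^{z h_i}) sinh(t√D)/√D]`
solve the coupled ODE system `φ_i' = (c_i z − λ_i) φ_i + λ_i e^{z h_i} φ_{1−i}`,
`φ_i(0) = 1`, where `2c = c_0 + c_1`, `2a = c_0 − c_1`, `2λ = λ_0 + λ_1`,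
`2κ = λ_0 − λ_1`, `H = h_0 + h_1` and `D = (az − κ)² + λ_0 λ_1 e^{zH} > 0`. -/
theorem stmt1 (z : ℝ) (c h lam : Fin 2 → ℝ) (hlam : ∀ i, 0 < lam i)
    (cc a L k H D : ℝ)
    (hcc : 2 * cc = c 0 + c 1) (ha : 2 * a = c 0 - c 1)
    (hL : 2 * L = lam 0 + lam 1) (hk : 2 * k = lam 0 - lam 1)
    (hH : H = h 0 + h 1)
    (hD : D = (a * z - k) ^ 2 + lam 0 * lam 1 * Real.exp (z * H)) (hDpos : 0 < D)
    (φ : Fin 2 → ℝ → ℝ)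
    (hφ : ∀ i t, φ i t =
      Real.exp (t * (cc * z - L)) *
        (Real.cosh (t * Real.sqrt D) +
          (-1 : ℝ) ^ (i : ℕ) * (a * z - k + (-1 : ℝ) ^ (i : ℕ) * lam i * Real.exp (z * h i)) *
            Real.sinh (t * Real.sqrt D) / Real.sqrt D)) :
    (∀ i, φ i 0 = 1) ∧
    (∀ i t, HasDerivAt (φ i)
      ((c i * z - lam i) * φ i t + lam i * Real.exp (z * h i) * φ (1 - i) t) t) := by
  have hs : Real.sqrt D ≠ 0 := by positivity
  have hs2 : Real.sqrt D * Real.sqrt D = D := Real.mul_self_sqrt hDpos.le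
  have hexpH : Real.exp (z * h 0) * Real.exp (z * h 1) = Real.exp (z * H) := by
    rw [← Real.exp_add, hH]; ring_nf
  constructor
  · intro i
    rw [hφ i 0]
    simp
  · intro i t
    have hfun : ∀ j : Fin 2, φ j = fun t => Real.exp (t * (cc * z - L)) *
        (Real.cosh (t * Real.sqrt D) +
          (-1 : ℝ) ^ (j : ℕ) * (a * z - k + (-1 : ℝ) ^ (j : ℕ) * lam j * Real.exp (z * h j)) *
            Real.sinh (t * Real.sqrt D) / Real.sqrt D) := fun j => funext (hφ j)
    have hi : i = 0 ∨ i = 1 := by omega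
    rcases hi with rfl | rfl
    · rw [show ((1 : Fin 2) - 0) = 1 from rfl, hfun 0, hfun 1]
      have h := aux_deriv (cc * z - L) (Real.sqrt D)
        ((-1 : ℝ) ^ ((0 : Fin 2) : ℕ) * (a * z - k + (-1 : ℝ) ^ ((0 : Fin 2) : ℕ) * lam 0 * Real.exp (z * h 0))) t
      convert h using 1
      simp only [Fin.val_zero, pow_zero, Fin.val_one, pow_one]
      have hc0 : c 0 = cc + a := by linarith
      have hl0 : lam 0 = L + k := by linarith
      have hl1 : lam 1 = L - k := by linarith
      rw [hl0, hl1] at hD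
      field_simp
      rw [hc0, hl0, hl1]
      linear_combination (-(Real.sinh (t * Real.sqrt D))) * hs2
        - (Real.sinh (t * Real.sqrt D)) * hD
        + (Real.sinh (t * Real.sqrt D)) * (L + k) * (L - k) * hexpH
    · rw [show ((1 : Fin 2) - 1) = 0 from rfl, hfun 0, hfun 1]
      have h := aux_deriv (cc * z - L) (Real.sqrt D)
        ((-1 : ℝ) ^ ((1 : Fin 2) : ℕ) * (a * z - k + (-1 : ℝ) ^ ((1 : Fin 2) : ℕ) * lam 1 * Real.exp (z * h 1))) t
      convert h using 1
      simp only [Fin.val_zero, pow_zero, Fin.val_one, pow_one]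
      have hc1 : c 1 = cc - a := by linarith
      have hl0 : lam 0 = L + k := by linarith
      have hl1 : lam 1 = L - k := by linarith
      rw [hl0, hl1] at hD
      field_simp
      rw [hc1, hl0, hl1]
      linear_combination (-(Real.sinh (t * Real.sqrt D))) * hs2
        - (Real.sinh (t * Real.sqrt D)) * hD
        + (Real.sinh (t * Real.sqrt D)) * (L + k) * (L - k) * hexpH
end

section
/- Let λ^Q > 0, d_0, d_1 ∈ ℝ, and m_i(s) as in the jump-telegraph mean formula. Then for 0 ≤ t ≤ T: ∫_t^T m_i(s − t) ds = (1/(2λ^Q))[(λ_1^Q d_0 + λ_0^Q d_1)(T−t)²/2 + (−1)^i λ_i^Q (d_0 − d_1) (2λ^Q(T−t) + e^{−2λ^Q(T−t)} − 1)/(4(λ^Q)²)]. Consequently, under the unbiased expectation hypothesis, the jump-telegraph Merton zero coupon bond price exp(−∫_t^T E^Q[r_s|F_t] ds) equals exp(r_t C(t,T) + D_i(t,T)) with C(t,T) = −(T−t) and D_i(t,T) = −∫_t^T m_i(s−t) ds, i.e. the bond price has affine structure in r_t. -/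
open Real intervalIntegral

/-- Integrating the jump-telegraph mean
`m_i(s) = (1/(2λ^Q))[(λ_1^Q d_0 + λ_0^Q d_1)s + (−1)^i λ_i^Q (d_0 − d_1)(1 − e^{−2λ^Q s})/(2λ^Q)]`
gives `∫_t^T m_i(s−t) ds = (1/(2λ^Q))[(λ_1^Q d_0 + λ_0^Q d_1)(T−t)²/2 +
(−1)^i λ_i^Q (d_0 − d_1)(2λ^Q(T−t) + e^{−2λ^Q(T−t)} − 1)/(4(λ^Q)²)]`; consequently, under
the unbiased expectation hypothesis the Merton jump-telegraph zero coupon bond price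
`exp(−∫_t^T E^Q[r_s|F_t] ds) = exp(−∫_t^T (r_t + m_i(s−t)) ds)` equals
`exp(r_t C(t,T) + D_i(t,T))` with `C(t,T) = −(T−t)`, `D_i(t,T) = −∫_t^T m_i(s−t) ds`:
an affine structure in `r_t`. -/
theorem stmt12 (lamQ d : Fin 2 → ℝ) (hlam : ∀ i, 0 < lamQ i)
    (L : ℝ) (hL : 2 * L = lamQ 0 + lamQ 1)
    (m : Fin 2 → ℝ → ℝ)
    (hm : ∀ i s, m i s =
      (1 / (2 * L)) * ((lamQ 1 * d 0 + lamQ 0 * d 1) * s +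
        (-1 : ℝ) ^ (i : ℕ) * lamQ i * (d 0 - d 1) * ((1 - Real.exp (-2 * L * s)) / (2 * L))))
    (t T : ℝ) (ht : 0 ≤ t) (htT : t ≤ T) :
    (∀ i : Fin 2,
      ∫ s in t..T, m i (s - t) =
        (1 / (2 * L)) * ((lamQ 1 * d 0 + lamQ 0 * d 1) * (T - t) ^ 2 / 2 +
          (-1 : ℝ) ^ (i : ℕ) * lamQ i * (d 0 - d 1) *
            ((2 * L * (T - t) + Real.exp (-2 * L * (T - t)) - 1) / (4 * L ^ 2)))) ∧
    ∀ (rt : ℝ) (i : Fin 2),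
      Real.exp (-∫ s in t..T, (rt + m i (s - t))) =
        Real.exp (rt * (-(T - t)) + (-∫ s in t..T, m i (s - t))) :=  by
  have hL0 : 0 < L := by nlinarith [hlam 0, hlam 1]
  have hLne : L ≠ 0 := ne_of_gt hL0
  have hmc : ∀ i : Fin 2, Continuous (fun s => m i (s - t)) := by
    intro i
    have h1 : (fun s => m i (s - t)) = fun s =>
        (1 / (2 * L)) * ((lamQ 1 * d 0 + lamQ 0 * d 1) * (s - t) +
          (-1 : ℝ) ^ (i : ℕ) * lamQ i * (d 0 - d 1) *
            ((1 - Real.exp (-2 * L * (s - t))) / (2 * L))) := by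
      funext s; rw [hm]
    rw [h1]
    continuity
  constructor
  · intro i
    set A := lamQ 1 * d 0 + lamQ 0 * d 1 with hA
    set B := (-1 : ℝ) ^ (i : ℕ) * lamQ i * (d 0 - d 1) with hB
    have key := intervalIntegral.integral_eq_sub_of_hasDerivAt
      (f := fun s => (1 / (2 * L)) * (A * (s - t) ^ 2 / 2 +
        B * ((s - t) + Real.exp (-2 * L * (s - t)) / (2 * L)) / (2 * L)))
      (f' := fun s => m i (s - t)) (a := t) (b := T)
      (by
        intro s _
        have h1 : HasDerivAt (fun s : ℝ => s - t) 1 s := (hasDerivAt_id s).sub_const t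
        have h2 : HasDerivAt (fun s : ℝ => (s - t) ^ 2) ((2 : ℕ) * (s - t) ^ 1 * 1) s :=
          h1.pow 2
        have h3 : HasDerivAt (fun s : ℝ => -2 * L * (s - t)) (-2 * L * 1) s :=
          h1.const_mul (-2 * L)
        have h4 : HasDerivAt (fun s : ℝ => Real.exp (-2 * L * (s - t)))
            (Real.exp (-2 * L * (s - t)) * (-2 * L * 1)) s := h3.exp
        have h5 := (((h2.const_mul A).div_const 2).add
          ((h1.add (h4.div_const (2 * L))).const_mul B |>.div_const (2 * L))).const_mul
          (1 / (2 * L))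
        convert h5 using 1
        · rfl
        · rfl
        simp only [hm]
        field_simp
        ring
      )
      ((hmc i).intervalIntegrable t T)
    rw [key]
    simp only [sub_self, mul_zero, Real.exp_zero]
    field_simp
    ring
  · intro rt i
    have hadd : (∫ s in t..T, (rt + m i (s - t))) =
        (∫ _s in t..T, rt) + ∫ s in t..T, m i (s - t) :=
      intervalIntegral.integral_add (intervalIntegrable_const)
        ((hmc i).intervalIntegrable t T)
    rw [hadd, intervalIntegral.integral_const, smul_eq_mul]
    congr 1
    ring
end
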